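/- Let β ∈ (0, 1/2) with β ≠ 1/3, set c = cos(2πβ), and let n ∈ ℕ. For every ω ∈ Ĩⁿ(β): (i) −1 < r_β(ω) < 0 and r_β(ω)² − g_β(ω)·r_β(ω) + 1 = 0; (ii) r_β((2n+1)π/L − ω) = r_β(ω); (iii) ω ↦ r_β(ω) is strictly increasing on (nπ/L + a(β)/L, ωₙ*] and strictly decreasing on [ωₙ*, (n+1)π/L − a(β)/L); consequently r_β(ω) ≤ r_β(ωₙ*) with equality if and only if ω = ωₙ*. -/

import Mathlib

open Real

/-- The edge length `L = 1/√3`. -/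
noncomputable def L : ℝ := 1 / Real.sqrt 3

/-- The Dirac frequency `ωₙ* = (2n+1)π/(2L)`. -/
noncomputable def ωstar (n : ℕ) : ℝ := (2 * n + 1) * π / (2 * L)

/-- `g_β(ω) = (9·cos²(ωL) − 3 − 2·cos(2πβ)) / √(2 + 2·cos(2πβ))`. -/
noncomputable def g (β ω : ℝ) : ℝ :=
  (9 * Real.cos (ω * L) ^ 2 - 3 - 2 * Real.cos (2 * π * β)) /
    Real.sqrt (2 + 2 * Real.cos (2 * π * β))

/-- `a(β) = arccos(√(3 + 2·cos(2πβ) − 2·√(2 + 2·cos(2πβ)))/3)`. -/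
noncomputable def aβ (β : ℝ) : ℝ :=
  Real.arccos (Real.sqrt (3 + 2 * Real.cos (2 * π * β) -
    2 * Real.sqrt (2 + 2 * Real.cos (2 * π * β))) / 3)

/-- The open interval `Ĩⁿ(β) = (nπ/L + a(β)/L, (n+1)π/L − a(β)/L)`. -/
noncomputable def Itilde (β : ℝ) (n : ℕ) : Set ℝ :=
  Set.Ioo (n * π / L + aβ β / L) ((n + 1) * π / L - aβ β / L)

/-- `r_β(ω) = (g_β(ω) + √(g_β(ω)² − 4))/2`. -/
noncomputable def r (β ω : ℝ) : ℝ := (g β ω + Real.sqrt (g β ω ^ 2 - 4)) / 2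

lemma aux_phi (x y : ℝ) (hxy : x < y) (hy : y ≤ -2) :
    (y + Real.sqrt (y ^ 2 - 4)) / 2 < (x + Real.sqrt (x ^ 2 - 4)) / 2 := by
  have hx : x < -2 := lt_of_lt_of_le hxy hy
  have hx4 : (0:ℝ) ≤ x ^ 2 - 4 := by nlinarith
  have hy4 : (0:ℝ) ≤ y ^ 2 - 4 := by nlinarith
  set u := Real.sqrt (x ^ 2 - 4) with hu
  set v := Real.sqrt (y ^ 2 - 4) with hv
  have hu0 : 0 ≤ u := Real.sqrt_nonneg _
  have hv0 : 0 ≤ v := Real.sqrt_nonneg _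
  have hu2 : u ^ 2 = x ^ 2 - 4 := Real.sq_sqrt hx4
  have hv2 : v ^ 2 = y ^ 2 - 4 := Real.sq_sqrt hy4
  have hux : u < -x := by
    rw [hu]; apply (Real.sqrt_lt' (by linarith)).2; nlinarith
  have hvy : v ≤ -y := by nlinarith
  have hsum : 0 < u + v := by
    have : 0 < u := by rw [hu]; apply Real.sqrt_pos.2; nlinarith
    linarith
  have key : (y - x) * (u + v) < (u - v) * (u + v) := by
    have h1 : (u - v) * (u + v) = (y - x) * (-x - y) := by nlinarith
    rw [h1]
    exact mul_lt_mul_of_pos_left (by linarith) (by linarith)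
  have : y - x < u - v := lt_of_mul_lt_mul_right (by linarith [key]) hsum.le
  linarith

lemma aux_cos_lt (A t : ℝ) (hA0 : 0 ≤ A) (hAπ : A < π) (h1 : A < t) (h2 : t < 2 * π - A) :
    Real.cos t < Real.cos A := by
  rcases le_or_gt t π with ht | ht
  · exact Real.strictAntiOn_cos ⟨hA0, hAπ.le⟩ ⟨by linarith, ht⟩ h1
  · have h3 : Real.cos t = Real.cos (2 * π - t) := by
      rw [Real.cos_sub]; simp [Real.cos_two_pi, Real.sin_two_pi]
    rw [h3]
    exact Real.strictAntiOn_cos ⟨hA0, hAπ.le⟩ ⟨by linarith, by linarith⟩ (by linarith)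

set_option maxHeartbeats 1000000 in
theorem main_aux (β cv : ℝ) (n : ℕ) (hc1 : -1 < cv) (hc2 : cv < 1) (hc3 : cv ≠ -1/2)
    (hgc : ∀ ω, g β ω = (9 * Real.cos (ω * L) ^ 2 - 3 - 2 * cv) / Real.sqrt (2 + 2 * cv))
    (hac : aβ β = Real.arccos (Real.sqrt (3 + 2 * cv - 2 * Real.sqrt (2 + 2 * cv)) / 3)) :
    (∀ ω ∈ Itilde β n,
      (-1 < r β ω ∧ r β ω < 0) ∧ r β ω ^ 2 - g β ω * r β ω + 1 = 0) ∧
    (∀ ω ∈ Itilde β n, r β ((2 * n + 1) * π / L - ω) = r β ω) ∧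
    StrictMonoOn (r β) (Set.Ioc (n * π / L + aβ β / L) (ωstar n)) ∧
    StrictAntiOn (r β) (Set.Ico (ωstar n) ((n + 1) * π / L - aβ β / L)) ∧
    (∀ ω ∈ Itilde β n, r β ω ≤ r β (ωstar n) ∧ (r β ω = r β (ωstar n) ↔ ω = ωstar n)) := by
  have hπ := Real.pi_pos
  have hL0 : 0 < L := by unfold L; positivity
  have hLne : L ≠ 0 := ne_of_gt hL0
  obtain ⟨s, hsdef⟩ : ∃ s, Real.sqrt (2 + 2 * cv) = s := ⟨_, rfl⟩
  have h2c : (0:ℝ) < 2 + 2 * cv := by linarith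
  have hs0 : 0 < s := hsdef ▸ Real.sqrt_pos.2 h2c
  have hs2 : s ^ 2 = 2 + 2 * cv := by rw [← hsdef]; exact Real.sq_sqrt h2c.le
  have hslt : s < 2 := by rw [← hsdef]; exact (Real.sqrt_lt' two_pos).2 (by nlinarith)
  have hs1 : s ≠ 1 := by intro h; rw [h] at hs2; apply hc3; nlinarith
  have hgc' : ∀ ω, g β ω = (9 * Real.cos (ω * L) ^ 2 - 3 - 2 * cv) / s := by
    intro ω; rw [hgc, hsdef]
  have habs : Real.sqrt (3 + 2 * cv - 2 * Real.sqrt (2 + 2 * cv)) = |s - 1| := by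
    rw [hsdef, show 3 + 2 * cv - 2 * s = (s - 1) ^ 2 by nlinarith, Real.sqrt_sq_eq_abs]
  have hk : aβ β = Real.arccos (|s - 1| / 3) := by rw [hac, habs]
  have hk0 : 0 < |s - 1| := abs_pos.2 (sub_ne_zero.2 hs1)
  have hk1 : |s - 1| < 1 := abs_lt.2 ⟨by linarith, by linarith⟩
  have hca : Real.cos (aβ β) = |s - 1| / 3 := by
    rw [hk]; exact Real.cos_arccos (by linarith) (by linarith)
  have ha0 : 0 < aβ β := by rw [hk]; exact Real.arccos_pos.2 (by linarith)
  have haπ2 : aβ β < π / 2 := by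
    by_contra h
    push_neg at h
    have hle : aβ β ≤ π + π / 2 := by
      rw [hk]; linarith [Real.arccos_le_pi (|s - 1| / 3)]
    have := Real.cos_nonpos_of_pi_div_two_le_of_le h hle
    rw [hca] at this; linarith
  have h9 : 9 * Real.cos (aβ β) ^ 2 = (s - 1) ^ 2 := by
    rw [hca, div_pow, sq_abs]; ring
  have hshift : ∀ x : ℝ, Real.cos (x + (n : ℝ) * (2 * π)) = Real.cos x := by
    intro x
    have h := Real.cos_add_int_mul_two_pi x (n : ℤ)
    push_cast at h
    exact h
  have hmodn : ∀ x : ℝ, Real.cos x = Real.cos (x - (n : ℝ) * (2 * π)) := by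
    intro x
    rw [← hshift (x - (n : ℝ) * (2 * π))]
    congr 1; ring
  have hlo : (n * π / L + aβ β / L) * L = n * π + aβ β := by field_simp
  have hhi : ((n + 1) * π / L - aβ β / L) * L = (n + 1) * π - aβ β := by field_simp
  have hstar : ωstar n * L = (2 * n + 1) * π / 2 := by rw [ωstar]; field_simp
  -- Key: g < -2 on the interval
  have hglt : ∀ ω : ℝ, n * π + aβ β < ω * L → ω * L < (n + 1) * π - aβ β → g β ω < -2 := by
    intro ω hb1 hb2
    have hcos : Real.cos (2 * (ω * L)) < Real.cos (2 * aβ β) := by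
      rw [hmodn (2 * (ω * L))]
      apply aux_cos_lt (2 * aβ β) _ (by linarith) (by linarith) (by push_cast; linarith)
        (by push_cast; linarith)
    have hc2a : Real.cos (2 * aβ β) = 2 * Real.cos (aβ β) ^ 2 - 1 := by
      rw [Real.cos_sq (aβ β)]; ring
    rw [hgc' ω, Real.cos_sq, div_lt_iff₀ hs0]
    nlinarith [hcos, hc2a, h9, hs2]
  have hIof : ∀ ω ∈ Itilde β n, n * π + aβ β < ω * L ∧ ω * L < (n + 1) * π - aβ β := by
    intro ω hω
    obtain ⟨h1, h2⟩ := hω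
    constructor
    · have := mul_lt_mul_of_pos_right h1 hL0; rwa [hlo] at this
    · have := mul_lt_mul_of_pos_right h2 hL0; rwa [hhi] at this
  -- part (i)
  have hpart1 : ∀ ω ∈ Itilde β n,
      ((-1 < r β ω ∧ r β ω < 0) ∧ r β ω ^ 2 - g β ω * r β ω + 1 = 0) := by
    intro ω hω
    obtain ⟨hb1, hb2⟩ := hIof ω hω
    have hx : g β ω < -2 := hglt ω hb1 hb2
    obtain ⟨x, hxdef⟩ : ∃ x, g β ω = x := ⟨_, rfl⟩
    rw [hxdef] at hx
    have hr : r β ω = (x + Real.sqrt (x ^ 2 - 4)) / 2 := by rw [r, hxdef]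
    have hx4 : (0:ℝ) ≤ x ^ 2 - 4 := by nlinarith
    have hd2 : Real.sqrt (x ^ 2 - 4) ^ 2 = x ^ 2 - 4 := Real.sq_sqrt hx4
    have hd0 : 0 ≤ Real.sqrt (x ^ 2 - 4) := Real.sqrt_nonneg _
    refine ⟨⟨?_, ?_⟩, ?_⟩
    · rw [hr]
      have : -2 - x < Real.sqrt (x ^ 2 - 4) :=
        (Real.lt_sqrt (by linarith : (0:ℝ) ≤ -2 - x)).2 (by nlinarith)
      linarith
    · rw [hr]
      have : Real.sqrt (x ^ 2 - 4) < -x := (Real.sqrt_lt' (by linarith)).2 (by nlinarith)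
      linarith
    · rw [hr, hxdef]
      linear_combination hd2 / 4
  -- part (ii)
  have hpart2 : ∀ ω : ℝ, r β ((2 * n + 1) * π / L - ω) = r β ω := by
    intro ω
    have harg : ((2 * n + 1) * π / L - ω) * L = (π - ω * L) + (n : ℝ) * (2 * π) := by
      field_simp; ring
    have hgeq : g β ((2 * n + 1) * π / L - ω) = g β ω := by
      rw [hgc' _, hgc' ω, harg, hshift, Real.cos_pi_sub, neg_sq]
    rw [r, r, hgeq]
  -- monotonicity
  have hlo_lt_star : n * π / L + aβ β / L < ωstar n := by
    apply lt_of_mul_lt_mul_right _ hL0.le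
    rw [hstar, hlo]; push_cast; linarith
  have hstar_lt_hi : ωstar n < (n + 1) * π / L - aβ β / L := by
    apply lt_of_mul_lt_mul_right _ hL0.le
    rw [hstar, hhi]; push_cast; linarith
  have hrdef : ∀ ω, r β ω = (g β ω + Real.sqrt (g β ω ^ 2 - 4)) / 2 := fun ω => rfl
  have hmono : StrictMonoOn (r β) (Set.Ioc (n * π / L + aβ β / L) (ωstar n)) := by
    intro ω₁ hω₁ ω₂ hω₂ h12
    have hb1 : n * π + aβ β < ω₁ * L := by
      have := mul_lt_mul_of_pos_right hω₁.1 hL0; rwa [hlo] at this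
    have hb2 : ω₂ * L ≤ (2 * n + 1) * π / 2 := by
      have := mul_le_mul_of_nonneg_right hω₂.2 hL0.le; rwa [hstar] at this
    have h12L : ω₁ * L < ω₂ * L := mul_lt_mul_of_pos_right h12 hL0
    have hcc : Real.cos (2 * (ω₂ * L)) < Real.cos (2 * (ω₁ * L)) := by
      rw [hmodn (2 * (ω₁ * L)), hmodn (2 * (ω₂ * L))]
      exact Real.strictAntiOn_cos ⟨by push_cast; linarith, by push_cast; linarith⟩
        ⟨by push_cast; linarith, by push_cast; linarith⟩ (by linarith)
    have hg21 : g β ω₂ < g β ω₁ := by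
      rw [hgc' ω₁, hgc' ω₂, Real.cos_sq (ω₁ * L), Real.cos_sq (ω₂ * L)]
      apply div_lt_div_of_pos_right _ hs0
      linarith
    have hx1 : g β ω₁ < -2 := hglt ω₁ hb1 (by push_cast; push_cast at hb2; linarith [haπ2, h12L])
    have := aux_phi (g β ω₂) (g β ω₁) hg21 hx1.le
    rw [hrdef ω₁, hrdef ω₂]
    exact this
  have hanti : StrictAntiOn (r β) (Set.Ico (ωstar n) ((n + 1) * π / L - aβ β / L)) := by
    intro ω₁ hω₁ ω₂ hω₂ h12
    have hb1 : (2 * n + 1) * π / 2 ≤ ω₁ * L := by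
      have := mul_le_mul_of_nonneg_right hω₁.1 hL0.le; rwa [hstar] at this
    have hb2 : ω₂ * L < (n + 1) * π - aβ β := by
      have := mul_lt_mul_of_pos_right hω₂.2 hL0; rwa [hhi] at this
    have h12L : ω₁ * L < ω₂ * L := mul_lt_mul_of_pos_right h12 hL0
    have hrefl : ∀ x : ℝ, Real.cos x = Real.cos ((2 * n + 2) * π - x) := by
      intro x
      have h := Real.cos_add_int_mul_two_pi (-x) ((n : ℤ) + 1)
      push_cast at h
      rw [show -x + ((n : ℝ) + 1) * (2 * π) = (2 * n + 2) * π - x by ring] at h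
      rw [Real.cos_neg] at h
      exact h.symm
    have hcc : Real.cos (2 * (ω₁ * L)) < Real.cos (2 * (ω₂ * L)) := by
      rw [hrefl (2 * (ω₁ * L)), hrefl (2 * (ω₂ * L))]
      exact Real.strictAntiOn_cos ⟨by push_cast; linarith, by push_cast; linarith⟩
        ⟨by push_cast; linarith, by push_cast; linarith⟩ (by linarith)
    have hg12 : g β ω₁ < g β ω₂ := by
      rw [hgc' ω₁, hgc' ω₂, Real.cos_sq (ω₁ * L), Real.cos_sq (ω₂ * L)]
      apply div_lt_div_of_pos_right _ hs0
      linarith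
    have hx2 : g β ω₂ < -2 := hglt ω₂ (by push_cast; push_cast at hb1; linarith [haπ2]) hb2
    have := aux_phi (g β ω₁) (g β ω₂) hg12 hx2.le
    rw [hrdef ω₁, hrdef ω₂]
    exact this
  -- part (v)
  have hpart5 : ∀ ω ∈ Itilde β n,
      r β ω ≤ r β (ωstar n) ∧ (r β ω = r β (ωstar n) ↔ ω = ωstar n) := by
    intro ω hω
    obtain ⟨h1, h2⟩ := hω
    rcases lt_trichotomy ω (ωstar n) with h | h | h
    · have hr := hmono ⟨h1, h.le⟩ ⟨hlo_lt_star, le_refl _⟩ h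
      exact ⟨hr.le, ⟨fun he => absurd he hr.ne, fun he => by rw [he]⟩⟩
    · exact ⟨le_of_eq (by rw [h]), by simp [h]⟩
    · have hr := hanti ⟨le_refl _, hstar_lt_hi⟩ ⟨h.le, h2⟩ h
      exact ⟨hr.le, ⟨fun he => absurd he hr.ne, fun he => by rw [he]⟩⟩
  exact ⟨hpart1, fun ω _ => hpart2 ω, hmono, hanti, hpart5⟩

theorem stmt_12 (β : ℝ) (hβ0 : 0 < β) (hβ1 : β < 1 / 2) (hβ3 : β ≠ 1 / 3) (n : ℕ) :
    (∀ ω ∈ Itilde β n,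
      (-1 < r β ω ∧ r β ω < 0) ∧ r β ω ^ 2 - g β ω * r β ω + 1 = 0) ∧
    (∀ ω ∈ Itilde β n, r β ((2 * n + 1) * π / L - ω) = r β ω) ∧
    StrictMonoOn (r β) (Set.Ioc (n * π / L + aβ β / L) (ωstar n)) ∧
    StrictAntiOn (r β) (Set.Ico (ωstar n) ((n + 1) * π / L - aβ β / L)) ∧
    (∀ ω ∈ Itilde β n, r β ω ≤ r β (ωstar n) ∧ (r β ω = r β (ωstar n) ↔ ω = ωstar n)) := by
  have hπ := Real.pi_pos
  have hb1 : 0 < 2 * π * β := by positivity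
  have hb2 : 2 * π * β < π := by nlinarith
  have hc1 : -1 < Real.cos (2 * π * β) := by
    have := Real.strictAntiOn_cos (Set.mem_Icc.2 ⟨hb1.le, hb2.le⟩)
      (Set.mem_Icc.2 ⟨hπ.le, le_refl π⟩) hb2
    rwa [Real.cos_pi] at this
  have hc2 : Real.cos (2 * π * β) < 1 := by
    have := Real.strictAntiOn_cos (Set.mem_Icc.2 ⟨le_refl 0, hπ.le⟩)
      (Set.mem_Icc.2 ⟨hb1.le, hb2.le⟩) hb1
    rwa [Real.cos_zero] at this
  have hc3 : Real.cos (2 * π * β) ≠ -1/2 := by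
    intro h
    have h23 : Real.cos (2 * π / 3) = -1/2 := by
      rw [show (2 * π / 3 : ℝ) = π - π / 3 by ring, Real.cos_pi_sub, Real.cos_pi_div_three]
      norm_num
    have heq := Real.injOn_cos (Set.mem_Icc.2 ⟨hb1.le, hb2.le⟩)
      (show (2 * π / 3 : ℝ) ∈ Set.Icc 0 π from Set.mem_Icc.2 ⟨by positivity, by linarith⟩)
      (by rw [h, h23])
    apply hβ3
    have h2 : (2 * π) * β = (2 * π) * (1/3) := by linarith [heq]
    have := mul_left_cancel₀ (by positivity : (2 * π : ℝ) ≠ 0) h2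
    linarith
  exact main_aux β (Real.cos (2 * π * β)) n hc1 hc2 hc3 (fun ω => rfl) rfl
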